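/- Let σ₁, …, σ_k be a regular sequence in a commutative ring A and let I = (σ₁, …, σ_k). Then the Rees algebra ⊕_{n≥0} I^n t^n is isomorphic as a graded A-algebra to A[u₁, …, u_k]/J, where each u_i has degree 1 and J is the ideal generated by the elements σ_i u_j − σ_j u_i for 1 ≤ i < j ≤ k (u_i mapping to σ_i t). -/

import Mathlib

set_option synthInstance.maxHeartbeats 1000000
set_option maxHeartbeats 1000000

noncomputable section

/-- The degree-`n` graded piece `Iⁿ tⁿ` of the Rees algebra of an ideal `I ⊆ A`,
as an `A`-submodule of `A[t]`. -/
def reesPieceP (A : Type) [CommRing A] (I : Ideal A) (n : ℕ) : Submodule A (Polynomial A) :=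
  Submodule.span A {f | ∃ a ∈ I ^ n, f = Polynomial.C a * Polynomial.X ^ n}

namespace ReesAux

open MvPolynomial

variable {A : Type} [CommRing A] {k : ℕ}

/-- The ideal generated by the first `r` elements of the sequence. -/
def Ir (σ : Fin k → A) (r : ℕ) : Ideal A := Ideal.span (σ '' {i : Fin k | (i : ℕ) < r})

/-- The Koszul relations ideal. -/
def J (σ : Fin k → A) : Ideal (MvPolynomial (Fin k) A) :=
  Ideal.span {f | ∃ i j : Fin k, i < j ∧ f = C (σ i) * X j - C (σ j) * X i}

/-- Polynomials supported on the first `r` variables. -/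
def Spt (A : Type) [CommRing A] (k r : ℕ) : Subalgebra A (MvPolynomial (Fin k) A) :=
  supported A {i : Fin k | (i : ℕ) < r}

lemma mem_Spt {r : ℕ} {F : MvPolynomial (Fin k) A} :
    F ∈ Spt A k r ↔ ∀ m ∈ F.support, ∀ i : Fin k, r ≤ (i : ℕ) → m i = 0 := by
  rw [Spt, mem_supported]
  constructor
  · intro h m hm i hi
    by_contra h0
    have : i ∈ F.vars := (mem_vars i).2 ⟨m, hm, Finsupp.mem_support_iff.2 h0⟩
    exact absurd (h this) (by simpa using hi)
  · intro h i hi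
    rcases (mem_vars i).1 hi with ⟨m, hm, him⟩
    show (i : ℕ) < r
    by_contra hc
    exact Finsupp.mem_support_iff.1 him (h m hm i (le_of_not_gt hc))

lemma monomial_mem_Spt {r : ℕ} {m : Fin k →₀ ℕ} {c : A}
    (hm : ∀ i : Fin k, r ≤ (i : ℕ) → m i = 0) : monomial m c ∈ Spt A k r := by
  rw [mem_Spt]
  intro m' hm' i hi
  have : m' = m := Finset.mem_singleton.1 (support_monomial_subset hm')
  exact this ▸ hm i hi

lemma isHomog_iff {F : MvPolynomial (Fin k) A} {d : ℕ} :
    F.IsHomogeneous d ↔ ∀ m, F.coeff m ≠ 0 → m.degree = d := by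
  show (∀ ⦃m⦄, F.coeff m ≠ 0 → (Finsupp.weight 1) m = d) ↔ _
  have h1 : (Finsupp.weight 1 : (Fin k →₀ ℕ) →+ ℕ) = Finsupp.degree :=
    Finsupp.degree_eq_weight_one.symm
  simp [h1]

lemma degree_single (j : Fin k) (n : ℕ) : (Finsupp.single j n).degree = n := by
  rcases eq_or_ne n 0 with h | h
  · simp [h]
  exact Finsupp.degree_single j n

lemma degree_add (a b : Fin k →₀ ℕ) : (a + b).degree = a.degree + b.degree := by
  simp [Finsupp.degree_eq_weight_one, map_add]

lemma sigma_mem_Ir {σ : Fin k → A} {r : ℕ} {i : Fin k} (hi : (i : ℕ) < r) : σ i ∈ Ir σ r :=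
  Ideal.subset_span ⟨i, hi, rfl⟩

lemma prod_pow_mem (σ : Fin k → A) (r : ℕ) (m : Fin k →₀ ℕ)
    (hm : ∀ i : Fin k, r ≤ (i : ℕ) → m i = 0) :
    (m.prod fun i e => σ i ^ e) ∈ Ir σ r ^ m.degree := by
  induction m using Finsupp.induction with
  | zero => rw [Finsupp.prod_zero_index, map_zero, pow_zero, Ideal.one_eq_top]; trivial
  | single_add a b f ha hb ih =>
    have hf : ∀ i : Fin k, r ≤ (i : ℕ) → f i = 0 := by
      intro i hi
      have := hm i hi
      rw [Finsupp.add_apply] at this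
      omega
    have hab : (a : ℕ) < r := by
      by_contra hc
      have := hm a (le_of_not_gt hc)
      rw [Finsupp.add_apply, Finsupp.single_eq_same] at this
      omega
    rw [Finsupp.prod_add_index' (fun _ => pow_zero _) (fun _ _ _ => pow_add _ _ _),
      degree_add, degree_single, pow_add]
    refine Ideal.mul_mem_mul ?_ (ih hf)
    rw [Finsupp.prod_single_index (h := fun (i : Fin k) (e : ℕ) => σ i ^ e) (pow_zero _)]
    exact Ideal.pow_mem_pow (sigma_mem_Ir hab) b

lemma eval_mem {σ : Fin k → A} {r d : ℕ} {F : MvPolynomial (Fin k) A}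
    (hF : F.IsHomogeneous d) (hS : F ∈ Spt A k r) : eval σ F ∈ Ir σ r ^ d := by
  have h := congrArg (eval σ) F.as_sum
  rw [map_sum] at h
  rw [h]
  refine Ideal.sum_mem _ fun m hm => ?_
  rw [eval_monomial]
  have hdeg : m.degree = d := isHomog_iff.1 hF m (mem_support_iff.1 hm)
  rw [← hdeg]
  exact Ideal.mul_mem_left _ _ (prod_pow_mem σ r m (fun i hi => mem_Spt.1 hS m hm i hi))


lemma exists_form_one {σ : Fin k → A} {r : ℕ} {a : A} (ha : a ∈ Ir σ r) :
    ∃ F : MvPolynomial (Fin k) A, F.IsHomogeneous 1 ∧ F ∈ Spt A k r ∧ eval σ F = a := by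
  induction ha using Submodule.span_induction with
  | mem x hx =>
    obtain ⟨i, hi, rfl⟩ := hx
    refine ⟨X i, isHomogeneous_X _ _, ?_, eval_X _⟩
    rw [show (X i : MvPolynomial (Fin k) A) = monomial (Finsupp.single i 1) 1 from rfl]
    refine monomial_mem_Spt fun i' hi' => ?_
    rw [Finsupp.single_apply, if_neg]
    rintro rfl
    exact absurd hi (not_lt.2 hi')
  | zero => exact ⟨0, (homogeneousSubmodule (Fin k) A 1).zero_mem, zero_mem _, map_zero _⟩
  | add x y hx hy ihx ihy =>
    obtain ⟨F, hF, hFS, hFe⟩ := ihx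
    obtain ⟨G, hG, hGS, hGe⟩ := ihy
    exact ⟨F + G, hF.add hG, add_mem hFS hGS, by rw [map_add, hFe, hGe]⟩
  | smul c x hx ihx =>
    obtain ⟨F, hF, hFS, hFe⟩ := ihx
    refine ⟨C c * F, ?_, mul_mem (Subalgebra.algebraMap_mem _ c) hFS, by rw [map_mul, eval_C, hFe, smul_eq_mul]⟩
    simpa using (isHomogeneous_C (Fin k) c).mul hF

lemma exists_form (σ : Fin k → A) (r : ℕ) :
    ∀ (d : ℕ) (a : A), a ∈ Ir σ r ^ d →
      ∃ F : MvPolynomial (Fin k) A, F.IsHomogeneous d ∧ F ∈ Spt A k r ∧ eval σ F = a := by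
  intro d
  induction d with
  | zero =>
    intro a _
    exact ⟨C a, isHomogeneous_C _ _, Subalgebra.algebraMap_mem _ a, eval_C _⟩
  | succ d ih =>
    intro a ha
    rw [pow_succ] at ha
    refine Submodule.mul_induction_on ha ?_ ?_
    · intro x hx y hy
      obtain ⟨F, hF, hFS, hFe⟩ := ih x hx
      obtain ⟨G, hG, hGS, hGe⟩ := exists_form_one hy
      exact ⟨F * G, hF.mul hG, mul_mem hFS hGS, by rw [map_mul, hFe, hGe]⟩
    · rintro x y ⟨F, hF, hFS, hFe⟩ ⟨G, hG, hGS, hGe⟩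
      exact ⟨F + G, hF.add hG, add_mem hFS hGS, by rw [map_add, hFe, hGe]⟩

lemma gen_mem_J (σ : Fin k → A) (i j : Fin k) : C (σ i) * X j - C (σ j) * X i ∈ J σ := by
  rcases lt_trichotomy i j with h | h | h
  · exact Ideal.subset_span ⟨i, j, h, rfl⟩
  · subst h
    simp
  · have : C (σ i) * X j - C (σ j) * X i = -(C (σ j) * X i - C (σ i) * X j) := by ring
    rw [this]
    exact neg_mem (Ideal.subset_span ⟨j, i, h, rfl⟩)

section Strip

/-- Strip one variable from each monomial, replacing it by the corresponding coefficient. -/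
def strip (σ : Fin k → A) (P : MvPolynomial (Fin k) A) : MvPolynomial (Fin k) A :=
  ∑ m ∈ P.support, if h : m.support.Nonempty
    then monomial (m - Finsupp.single (m.support.min' h) 1) (P.coeff m * σ (m.support.min' h))
    else 0

variable {σ : Fin k → A} {P : MvPolynomial (Fin k) A} {d r : ℕ}

lemma support_nonempty_of_mem (hP : P.IsHomogeneous d) (hd : d ≠ 0) {m : Fin k →₀ ℕ}
    (hm : m ∈ P.support) : m.support.Nonempty := by
  by_contra h
  have hm0 : m = 0 := Finsupp.support_eq_empty.1 (Finset.not_nonempty_iff_eq_empty.1 h)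
  have h2 := isHomog_iff.1 hP m (mem_support_iff.1 hm)
  rw [hm0, map_zero] at h2
  exact hd h2.symm

lemma min'_facts (hP : P.IsHomogeneous d) (hd : d ≠ 0) {m : Fin k →₀ ℕ} (hm : m ∈ P.support) :
    Finsupp.single (m.support.min' (support_nonempty_of_mem hP hd hm)) 1 ≤ m ∧
      m - Finsupp.single (m.support.min' (support_nonempty_of_mem hP hd hm)) 1 +
        Finsupp.single (m.support.min' (support_nonempty_of_mem hP hd hm)) 1 = m := by
  have hmem := Finset.min'_mem _ (support_nonempty_of_mem hP hd hm)
  have hle : Finsupp.single (m.support.min' (support_nonempty_of_mem hP hd hm)) 1 ≤ m :=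
    Finsupp.single_le_iff.2 (Nat.one_le_iff_ne_zero.2 (Finsupp.mem_support_iff.1 hmem))
  exact ⟨hle, tsub_add_cancel_of_le hle⟩

lemma strip_homog (hP : P.IsHomogeneous d) (hd : d ≠ 0) :
    (strip σ P).IsHomogeneous (d - 1) := by
  rw [← mem_homogeneousSubmodule, strip]
  refine Submodule.sum_mem _ fun m hm => ?_
  rw [dif_pos (support_nonempty_of_mem hP hd hm), mem_homogeneousSubmodule]
  refine isHomogeneous_monomial _ ?_
  obtain ⟨hle, hmeq⟩ := min'_facts hP hd hm
  have hdeg : m.degree = d := isHomog_iff.1 hP m (mem_support_iff.1 hm)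
  have h3 := degree_add
    (m - Finsupp.single (m.support.min' (support_nonempty_of_mem hP hd hm)) 1)
    (Finsupp.single (m.support.min' (support_nonempty_of_mem hP hd hm)) 1)
  rw [hmeq, degree_single, hdeg] at h3
  omega

lemma strip_mem_Spt (hS : P ∈ Spt A k r) : strip σ P ∈ Spt A k r := by
  refine Subalgebra.sum_mem _ fun m hm => ?_
  by_cases h : m.support.Nonempty
  · rw [dif_pos h]
    refine monomial_mem_Spt fun i hi => ?_
    rw [Finsupp.tsub_apply, mem_Spt.1 hS m hm i hi]
    exact Nat.zero_sub _
  · rw [dif_neg h]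
    exact zero_mem _

lemma strip_coeff_mem (hS : P ∈ Spt A k r) (μ : Fin k →₀ ℕ) :
    (strip σ P).coeff μ ∈ Ir σ r := by
  rw [strip, coeff_sum]
  refine Ideal.sum_mem _ fun m hm => ?_
  by_cases h : m.support.Nonempty
  · rw [dif_pos h, coeff_monomial]
    split_ifs with h2
    · refine Ideal.mul_mem_left _ _ (sigma_mem_Ir ?_)
      by_contra hc
      have := mem_Spt.1 hS m hm _ (le_of_not_gt hc)
      exact Finsupp.mem_support_iff.1 (Finset.min'_mem _ h) this
    · exact zero_mem _
  · rw [dif_neg h, coeff_zero]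
    exact zero_mem _

lemma eval_strip (hP : P.IsHomogeneous d) (hd : d ≠ 0) : eval σ (strip σ P) = eval σ P := by
  rw [strip, map_sum]
  have h2 := congrArg (eval σ) P.as_sum
  rw [map_sum] at h2
  rw [h2]
  refine Finset.sum_congr rfl fun m hm => ?_
  rw [dif_pos (support_nonempty_of_mem hP hd hm), eval_monomial, eval_monomial]
  obtain ⟨hle, hmeq⟩ := min'_facts hP hd hm
  conv_rhs => rw [show m.prod (fun i e => σ i ^ e) =
    ((m - Finsupp.single (m.support.min' (support_nonempty_of_mem hP hd hm)) 1) +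
      Finsupp.single (m.support.min' (support_nonempty_of_mem hP hd hm)) 1).prod
        (fun i e => σ i ^ e) from by rw [hmeq]]
  rw [Finsupp.prod_add_index' (fun _ => pow_zero _) (fun _ _ _ => pow_add _ _ _),
    Finsupp.prod_single_index (h := fun (i : Fin k) (e : ℕ) => σ i ^ e) (pow_zero _)]
  ring

lemma strip_rel (hP : P.IsHomogeneous d) (hd : d ≠ 0) (j0 : Fin k) :
    C (σ j0) * P - X j0 * strip σ P ∈ J σ := by
  have h2 : C (σ j0) * P = ∑ m ∈ P.support, C (σ j0) * monomial m (P.coeff m) := by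
    conv_lhs => rw [P.as_sum]
    rw [Finset.mul_sum]
  rw [h2, strip, Finset.mul_sum, ← Finset.sum_sub_distrib]
  refine Ideal.sum_mem _ fun m hm => ?_
  rw [dif_pos (support_nonempty_of_mem hP hd hm)]
  obtain ⟨hle, hmeq⟩ := min'_facts hP hd hm
  set j := m.support.min' (support_nonempty_of_mem hP hd hm) with hj
  have key : C (σ j0) * monomial m (P.coeff m)
      - X j0 * monomial (m - Finsupp.single j 1) (P.coeff m * σ j)
      = monomial (m - Finsupp.single j 1) (P.coeff m) * (C (σ j0) * X j - C (σ j) * X j0) := by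
    rw [mul_sub]
    congr 1
    · rw [C_mul_monomial, show (X j : MvPolynomial (Fin k) A) = monomial (Finsupp.single j 1) 1
        from rfl, C_mul_monomial, monomial_mul, hmeq]
      ring_nf
    · rw [show (X j0 : MvPolynomial (Fin k) A) = monomial (Finsupp.single j0 1) 1 from rfl,
        C_mul_monomial, monomial_mul, monomial_mul]
      rw [add_comm]
      ring_nf
  rw [key]
  exact Ideal.mul_mem_left _ _ (gen_mem_J σ j0 j)

end Strip


lemma Ir_mono (σ : Fin k → A) {r r' : ℕ} (h : r ≤ r') : Ir σ r ≤ Ir σ r' :=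
  Ideal.span_mono (Set.image_mono fun i hi => lt_of_lt_of_le hi h)

lemma Spt_mono {r r' : ℕ} (h : r ≤ r') : Spt A k r ≤ Spt A k r' :=
  supported_mono fun i hi => lt_of_lt_of_le hi h

lemma eq_C_of_homog_zero {σ : Fin k → A} {F : MvPolynomial (Fin k) A}
    (hF : F.IsHomogeneous 0) : F = C (eval σ F) := by
  have h1 : F = C (F.coeff 0) := by
    ext m'
    rw [coeff_C]
    split_ifs with h
    · rw [h]
    · by_contra hc
      exact h (Eq.symm ((Finsupp.degree_eq_zero_iff m').1 (isHomog_iff.1 hF m' fun h2 => hc (h2 ▸ rfl))))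
  have h2 : eval σ F = F.coeff 0 := by
    conv_lhs => rw [h1]
    rw [eval_C]
  rw [h2]
  exact h1

lemma eq_C_of_Spt_zero {σ : Fin k → A} {F : MvPolynomial (Fin k) A}
    (hS : F ∈ Spt A k 0) : F = C (eval σ F) := by
  have h1 : F = C (F.coeff 0) := by
    ext m'
    rw [coeff_C]
    split_ifs with h
    · rw [h]
    · by_contra hc
      refine h ?_
      have hm : m' ∈ F.support := mem_support_iff.2 fun h2 => hc (h2 ▸ rfl)
      ext i
      exact (mem_Spt.1 hS m' hm i (Nat.zero_le _)).symm ▸ rfl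
  have h2 : eval σ F = F.coeff 0 := by
    conv_lhs => rw [h1]
    rw [eval_C]
  rw [h2]
  exact h1

lemma ofList_take (σ : Fin k → A) (r : ℕ) :
    Ideal.ofList ((List.ofFn σ).take r) = Ir σ r := by
  have hset : {x | x ∈ (List.ofFn σ).take r} = σ '' {i : Fin k | (i : ℕ) < r} := by
    ext x
    rw [Set.mem_setOf_eq, List.mem_take_iff_getElem]
    constructor
    · rintro ⟨i, hi, hxe⟩
      rw [lt_min_iff, List.length_ofFn] at hi
      exact ⟨⟨i, hi.2⟩, hi.1, by rw [← hxe, List.getElem_ofFn]⟩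
    · rintro ⟨i, hi, rfl⟩
      refine ⟨(i : ℕ), ?_, by rw [List.getElem_ofFn]⟩
      rw [lt_min_iff, List.length_ofFn]
      exact ⟨hi, i.isLt⟩
  exact congrArg Ideal.span hset

lemma regular_step (σ : Fin k → A) (hreg : RingTheory.Sequence.IsRegular A (List.ofFn σ))
    {r : ℕ} (hr : r < k) {a : A} (h : σ ⟨r, hr⟩ * a ∈ Ir σ r) : a ∈ Ir σ r := by
  have hw := hreg.toIsWeaklyRegular.regular_mod_prev r (by simpa using hr)
  have e : Ideal.ofList ((List.ofFn σ).take r) • (⊤ : Submodule A A) = (Ir σ r : Submodule A A) := by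
    rw [Ideal.smul_eq_mul, Ideal.mul_top, ofList_take]
  rw [e] at hw
  have h0 : (List.ofFn σ)[r]'(by simpa using hr) •
      (Submodule.Quotient.mk a : A ⧸ (Ir σ r : Submodule A A)) =
      (List.ofFn σ)[r]'(by simpa using hr) • (0 : A ⧸ (Ir σ r : Submodule A A)) := by
    rw [smul_zero, ← Submodule.Quotient.mk_smul, smul_eq_mul]
    rw [Submodule.Quotient.mk_eq_zero]
    rw [List.getElem_ofFn]
    exact h
  have := hw h0
  rw [Submodule.Quotient.mk_eq_zero] at this
  exact this

/-- Quasi-regularity, degenerate-evaluation form. -/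
lemma Qfull (σ : Fin k → A) (r d : ℕ)
    (hQ0 : ∀ F : MvPolynomial (Fin k) A, F.IsHomogeneous d → F ∈ Spt A k r →
      eval σ F = 0 → ∀ m, F.coeff m ∈ Ir σ r) :
    ∀ F : MvPolynomial (Fin k) A, F.IsHomogeneous d → F ∈ Spt A k r →
      eval σ F ∈ Ir σ r ^ (d + 1) → ∀ m, F.coeff m ∈ Ir σ r := by
  intro F hF hS he m
  obtain ⟨P, hP, hPS, hPe⟩ := exists_form σ r (d + 1) _ he
  have hd1 : d + 1 ≠ 0 := Nat.succ_ne_zero d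
  have h1 : (F - strip σ P).IsHomogeneous d := by
    rw [← mem_homogeneousSubmodule]
    refine sub_mem ((mem_homogeneousSubmodule _ _).2 hF) ?_
    rw [mem_homogeneousSubmodule]
    simpa using strip_homog hP hd1
  have h2 : F - strip σ P ∈ Spt A k r := sub_mem hS (strip_mem_Spt hPS)
  have h3 : eval σ (F - strip σ P) = 0 := by
    rw [map_sub, eval_strip hP hd1, hPe, sub_self]
  have h4 := hQ0 _ h1 h2 h3 m
  have h5 := strip_coeff_mem (σ := σ) hPS m
  have h6 : F.coeff m = (F - strip σ P).coeff m + (strip σ P).coeff m := by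
    rw [coeff_sub]
    ring
  rw [h6]
  exact add_mem h4 h5

lemma Qprime (σ : Fin k → A) (hreg : RingTheory.Sequence.IsRegular A (List.ofFn σ))
    {r : ℕ} (hr : r < k)
    (hQ : ∀ (d : ℕ) (F : MvPolynomial (Fin k) A), F.IsHomogeneous d → F ∈ Spt A k r →
      eval σ F ∈ Ir σ r ^ (d + 1) → ∀ m, F.coeff m ∈ Ir σ r) :
    ∀ (e : ℕ) (a : A), σ ⟨r, hr⟩ * a ∈ Ir σ r ^ e → a ∈ Ir σ r ^ e := by
  intro e
  induction e with
  | zero => intro a _; rw [pow_zero, Ideal.one_eq_top]; trivial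
  | succ e ih =>
    intro a ha
    have ha' : a ∈ Ir σ r ^ e := ih a (Ideal.pow_le_pow_right (Nat.le_succ e) ha)
    obtain ⟨G, hG, hGS, hGe⟩ := exists_form σ r e a ha'
    have hCG : (C (σ ⟨r, hr⟩) * G).IsHomogeneous e := by
      simpa using (isHomogeneous_C (Fin k) (σ ⟨r, hr⟩)).mul hG
    have hCGS : C (σ ⟨r, hr⟩) * G ∈ Spt A k r :=
      mul_mem (Subalgebra.algebraMap_mem _ _) hGS
    have hCGe : eval σ (C (σ ⟨r, hr⟩) * G) ∈ Ir σ r ^ (e + 1) := by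
      rw [map_mul, eval_C, hGe]; exact ha
    have hco := hQ e _ hCG hCGS hCGe
    rw [← hGe]
    have h2 := congrArg (eval σ) G.as_sum
    rw [map_sum] at h2
    rw [h2, pow_succ']
    refine Ideal.sum_mem _ fun m hm => ?_
    rw [eval_monomial]
    have hcm : G.coeff m ∈ Ir σ r := by
      apply regular_step σ hreg hr
      have := hco m
      rwa [coeff_C_mul] at this
    refine Ideal.mul_mem_mul hcm ?_
    rw [← isHomog_iff.1 hG m (mem_support_iff.1 hm)]
    exact prod_pow_mem σ r m fun i hi => mem_Spt.1 hGS m hm i hi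

lemma Q0 (σ : Fin k → A) (hreg : RingTheory.Sequence.IsRegular A (List.ofFn σ)) :
    ∀ r, r ≤ k → ∀ (d : ℕ) (F : MvPolynomial (Fin k) A), F.IsHomogeneous d →
      F ∈ Spt A k r → eval σ F = 0 → ∀ m, F.coeff m ∈ Ir σ r := by
  intro r
  induction r with
  | zero =>
    intro _ d F _ hS he m
    have h1 := eq_C_of_Spt_zero (σ := σ) hS
    rw [he] at h1
    rw [h1]
    simp only [map_zero, coeff_zero]
    exact zero_mem _
  | succ r ih =>
    intro hrk d
    have hr : r < k := hrk
    have hQ0r := ih (le_of_lt hr)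
    have hQ : ∀ (d' : ℕ) (F : MvPolynomial (Fin k) A), F.IsHomogeneous d' → F ∈ Spt A k r →
        eval σ F ∈ Ir σ r ^ (d' + 1) → ∀ m, F.coeff m ∈ Ir σ r :=
      fun d' => Qfull σ r d' (hQ0r d')
    induction d using Nat.strong_induction_on with
    | _ d ihd =>
    intro F hF hS he m
    by_cases hd : d = 0
    · subst hd
      have h1 := eq_C_of_homog_zero (σ := σ) hF
      rw [he] at h1
      rw [h1]
      simp only [map_zero, coeff_zero]
      exact zero_mem _
    · set jr : Fin k := ⟨r, hr⟩ with hjr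
      set s : Fin k →₀ ℕ := Finsupp.single jr 1 with hs
      set G := F.modMonomial s with hG
      set H := F.divMonomial s with hH
      have hFGH : monomial s 1 * H + G = F := F.divMonomial_add_modMonomial s
      have hH_homog : H.IsHomogeneous (d - 1) := by
        rw [isHomog_iff]
        intro m' hm'
        rw [hH, coeff_divMonomial] at hm'
        have := isHomog_iff.1 hF _ hm'
        rw [degree_add, degree_single] at this
        omega
      have hG_homog : G.IsHomogeneous d := by
        rw [isHomog_iff]
        intro m' hm'
        by_cases hsm : s ≤ m'
        · exact absurd (coeff_modMonomial_of_le F hsm) hm'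
        · rw [hG, coeff_modMonomial_of_not_le F hsm] at hm'
          exact isHomog_iff.1 hF _ hm'
      have hH_Spt : H ∈ Spt A k (r + 1) := by
        rw [mem_Spt]
        intro m' hm' i hi
        have h2 : F.coeff (s + m') ≠ 0 := by
          rw [← coeff_divMonomial s F m']
          exact mem_support_iff.1 hm'
        have h3 := mem_Spt.1 hS _ (mem_support_iff.2 h2) i hi
        rw [Finsupp.add_apply] at h3
        omega
      have hG_Spt : G ∈ Spt A k r := by
        rw [mem_Spt]
        intro m' hm' i hi
        by_cases hsm : s ≤ m'
        · exact absurd (coeff_modMonomial_of_le F hsm) (mem_support_iff.1 hm')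
        · have h2 : F.coeff m' ≠ 0 := by
            rw [← coeff_modMonomial_of_not_le F hsm]
            exact mem_support_iff.1 hm'
          rcases Nat.lt_or_ge (i : ℕ) (r + 1) with hi2 | hi2
          · have hir : (i : ℕ) = r := by omega
            have h5 : ¬ (1 ≤ m' jr) := fun h6 => hsm (Finsupp.single_le_iff.2 h6)
            have h7 : m' i = m' jr := by rw [show i = jr from Fin.ext hir]
            omega
          · exact mem_Spt.1 hS _ (mem_support_iff.2 h2) i hi2
      have hevalm : eval σ (monomial s (1 : A)) = σ jr := by
        rw [eval_monomial, Finsupp.prod_single_index (h := fun (i : Fin k) (e : ℕ) => σ i ^ e)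
          (pow_zero _), pow_one, one_mul]
      have heval : eval σ G + σ jr * eval σ H = 0 := by
        have := congrArg (eval σ) hFGH
        rw [map_add, map_mul, hevalm, he] at this
        rw [← this]
        ring
      have hevG : eval σ G ∈ Ir σ r ^ d := eval_mem hG_homog hG_Spt
      have hσH : σ jr * eval σ H ∈ Ir σ r ^ d := by
        rw [eq_neg_of_add_eq_zero_right heval]
        exact neg_mem hevG
      have hevH : eval σ H ∈ Ir σ r ^ d := Qprime σ hreg hr hQ d _ hσH
      -- coefficients of H lie in Ir (r+1)
      have hHco : ∀ μ, H.coeff μ ∈ Ir σ (r + 1) := by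
        have h9 : eval σ H ∈ Ir σ (r + 1) ^ ((d - 1) + 1) := by
          have h10 : Ir σ r ^ d ≤ Ir σ (r + 1) ^ d := Ideal.pow_right_mono (Ir_mono σ (Nat.le_succ r)) d
          have : (d - 1) + 1 = d := by omega
          rw [this]
          exact h10 hevH
        exact Qfull σ (r + 1) (d - 1)
          (fun F' hF' hS' he' => ihd (d - 1) (by omega) F' hF' hS' he') H hH_homog hH_Spt h9
      -- coefficients of G lie in Ir (r+1)
      obtain ⟨K, hK, hKS, hKe⟩ := exists_form σ r d (eval σ H) hevH
      have hG'_homog : (G + C (σ jr) * K).IsHomogeneous d := by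
        rw [← mem_homogeneousSubmodule]
        refine add_mem ((mem_homogeneousSubmodule _ _).2 hG_homog) ?_
        rw [mem_homogeneousSubmodule]
        simpa using (isHomogeneous_C (Fin k) (σ jr)).mul hK
      have hG'_Spt : G + C (σ jr) * K ∈ Spt A k r :=
        add_mem hG_Spt (mul_mem (Subalgebra.algebraMap_mem _ _) hKS)
      have hG'_eval : eval σ (G + C (σ jr) * K) = 0 := by
        rw [map_add, map_mul, eval_C, hKe]
        exact heval
      have hG'co := hQ0r d _ hG'_homog hG'_Spt hG'_eval
      -- assemble
      have hcoeqn : F.coeff m = (monomial s (1 : A) * H).coeff m + G.coeff m := by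
        rw [← coeff_add, hFGH]
      rw [hcoeqn]
      refine add_mem ?_ ?_
      · rw [coeff_monomial_mul']
        split_ifs with h
        · rw [one_mul]
          exact hHco _
        · exact zero_mem _
      · have : G.coeff m = (G + C (σ jr) * K).coeff m - σ jr * K.coeff m := by
          rw [coeff_add, coeff_C_mul]
          ring
        rw [this]
        refine sub_mem (Ir_mono σ (Nat.le_succ r) (hG'co m)) ?_
        exact Ideal.mul_mem_right _ _ (sigma_mem_Ir (Nat.lt_succ_self r))


/-- Main lemma: homogeneous relations among a regular sequence lie in the Koszul ideal. -/
lemma main_koszul (σ : Fin k → A) (hreg : RingTheory.Sequence.IsRegular A (List.ofFn σ)) :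
    ∀ r, r ≤ k → ∀ (d : ℕ) (F : MvPolynomial (Fin k) A), F.IsHomogeneous d →
      F ∈ Spt A k r → eval σ F = 0 → F ∈ J σ := by
  intro r
  induction r with
  | zero =>
    intro _ d F _ hS he
    have h1 := eq_C_of_Spt_zero (σ := σ) hS
    rw [he] at h1
    rw [h1, map_zero]
    exact zero_mem _
  | succ r ih =>
    intro hrk d
    have hr : r < k := hrk
    have hQ0r := Q0 σ hreg r (le_of_lt hr)
    have hQ : ∀ (d' : ℕ) (F : MvPolynomial (Fin k) A), F.IsHomogeneous d' → F ∈ Spt A k r →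
        eval σ F ∈ Ir σ r ^ (d' + 1) → ∀ m, F.coeff m ∈ Ir σ r :=
      fun d' => Qfull σ r d' (hQ0r d')
    induction d using Nat.strong_induction_on with
    | _ d ihd =>
    intro F hF hS he
    by_cases hd : d = 0
    · subst hd
      have h1 := eq_C_of_homog_zero (σ := σ) hF
      rw [he] at h1
      rw [h1, map_zero]
      exact zero_mem _
    · set jr : Fin k := ⟨r, hr⟩ with hjr
      set s : Fin k →₀ ℕ := Finsupp.single jr 1 with hs
      set G := F.modMonomial s with hG
      set H := F.divMonomial s with hH
      have hFGH : monomial s 1 * H + G = F := F.divMonomial_add_modMonomial s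
      have hH_homog : H.IsHomogeneous (d - 1) := by
        rw [isHomog_iff]
        intro m' hm'
        rw [hH, coeff_divMonomial] at hm'
        have := isHomog_iff.1 hF _ hm'
        rw [degree_add, degree_single] at this
        omega
      have hG_homog : G.IsHomogeneous d := by
        rw [isHomog_iff]
        intro m' hm'
        by_cases hsm : s ≤ m'
        · exact absurd (coeff_modMonomial_of_le F hsm) hm'
        · rw [hG, coeff_modMonomial_of_not_le F hsm] at hm'
          exact isHomog_iff.1 hF _ hm'
      have hH_Spt : H ∈ Spt A k (r + 1) := by
        rw [mem_Spt]
        intro m' hm' i hi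
        have h2 : F.coeff (s + m') ≠ 0 := by
          rw [← coeff_divMonomial s F m']
          exact mem_support_iff.1 hm'
        have h3 := mem_Spt.1 hS _ (mem_support_iff.2 h2) i hi
        rw [Finsupp.add_apply] at h3
        omega
      have hG_Spt : G ∈ Spt A k r := by
        rw [mem_Spt]
        intro m' hm' i hi
        by_cases hsm : s ≤ m'
        · exact absurd (coeff_modMonomial_of_le F hsm) (mem_support_iff.1 hm')
        · have h2 : F.coeff m' ≠ 0 := by
            rw [← coeff_modMonomial_of_not_le F hsm]
            exact mem_support_iff.1 hm'
          rcases Nat.lt_or_ge (i : ℕ) (r + 1) with hi2 | hi2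
          · have hir : (i : ℕ) = r := by omega
            have h5 : ¬ (1 ≤ m' jr) := fun h6 => hsm (Finsupp.single_le_iff.2 h6)
            have h7 : m' i = m' jr := by rw [show i = jr from Fin.ext hir]
            omega
          · exact mem_Spt.1 hS _ (mem_support_iff.2 h2) i hi2
      have hevalm : eval σ (monomial s (1 : A)) = σ jr := by
        rw [eval_monomial, Finsupp.prod_single_index (h := fun (i : Fin k) (e : ℕ) => σ i ^ e)
          (pow_zero _), pow_one, one_mul]
      have heval : eval σ G + σ jr * eval σ H = 0 := by
        have := congrArg (eval σ) hFGH
        rw [map_add, map_mul, hevalm, he] at this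
        rw [← this]
        ring
      have hevG : eval σ G ∈ Ir σ r ^ d := eval_mem hG_homog hG_Spt
      have hσH : σ jr * eval σ H ∈ Ir σ r ^ d := by
        rw [eq_neg_of_add_eq_zero_right heval]
        exact neg_mem hevG
      have hevH : eval σ H ∈ Ir σ r ^ d := Qprime σ hreg hr hQ d _ hσH
      obtain ⟨K, hK, hKS, hKe⟩ := exists_form σ r d (eval σ H) hevH
      -- the corrected tail G' := G + C (σ jr) * K is a relation in fewer variables
      have hG'_homog : (G + C (σ jr) * K).IsHomogeneous d := by
        rw [← mem_homogeneousSubmodule]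
        refine add_mem ((mem_homogeneousSubmodule _ _).2 hG_homog) ?_
        rw [mem_homogeneousSubmodule]
        simpa using (isHomogeneous_C (Fin k) (σ jr)).mul hK
      have hG'_Spt : G + C (σ jr) * K ∈ Spt A k r :=
        add_mem hG_Spt (mul_mem (Subalgebra.algebraMap_mem _ _) hKS)
      have hG'_eval : eval σ (G + C (σ jr) * K) = 0 := by
        rw [map_add, map_mul, eval_C, hKe]
        exact heval
      have hG'J : G + C (σ jr) * K ∈ J σ := ih (le_of_lt hr) d _ hG'_homog hG'_Spt hG'_eval
      -- the stripped form of K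
      set K' := strip σ K with hK'
      have hK'_homog : K'.IsHomogeneous (d - 1) := strip_homog hK hd
      have hK'_Spt : K' ∈ Spt A k r := strip_mem_Spt hKS
      have hK'_eval : eval σ K' = eval σ H := by rw [hK', eval_strip hK hd, hKe]
      have hrelJ : C (σ jr) * K - X jr * K' ∈ J σ := strip_rel hK hd jr
      -- the corrected quotient H' := H - K' is a relation of lower degree
      have hH'_homog : (H - K').IsHomogeneous (d - 1) := by
        rw [← mem_homogeneousSubmodule]
        exact sub_mem ((mem_homogeneousSubmodule _ _).2 hH_homog)
          ((mem_homogeneousSubmodule _ _).2 hK'_homog)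
      have hH'_Spt : H - K' ∈ Spt A k (r + 1) :=
        sub_mem hH_Spt (Spt_mono (Nat.le_succ r) hK'_Spt)
      have hH'_eval : eval σ (H - K') = 0 := by
        rw [map_sub, hK'_eval, sub_self]
      have hH'J : H - K' ∈ J σ := ihd (d - 1) (by omega) _ hH'_homog hH'_Spt hH'_eval
      -- assemble
      have hX : (X jr : MvPolynomial (Fin k) A) = monomial s 1 := rfl
      have hdecomp : F = X jr * (H - K') + (G + C (σ jr) * K)
          - (C (σ jr) * K - X jr * K') := by
        rw [hX, ← hFGH]
        ring
      rw [hdecomp]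
      exact sub_mem (add_mem (Ideal.mul_mem_left _ _ hH'J) hG'J) hrelJ


/-- The presentation map `A[u₁,…,u_k] → A[t]`, `uᵢ ↦ σᵢ t`. -/
def phi (σ : Fin k → A) : MvPolynomial (Fin k) A →ₐ[A] Polynomial A :=
  aeval fun i => Polynomial.C (σ i) * Polynomial.X

lemma prod_CX (σ : Fin k → A) (m : Fin k →₀ ℕ) :
    (m.prod fun i e => (Polynomial.C (σ i) * Polynomial.X) ^ e) =
      Polynomial.C (m.prod fun i e => σ i ^ e) * Polynomial.X ^ m.degree := by
  induction m using Finsupp.induction with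
  | zero => simp
  | single_add a b f ha hb ih =>
    rw [Finsupp.prod_add_index' (fun _ => pow_zero _) (fun _ _ _ => pow_add _ _ _),
      Finsupp.prod_add_index' (fun _ => pow_zero _) (fun _ _ _ => pow_add _ _ _),
      Finsupp.prod_single_index
        (h := fun (i : Fin k) (e : ℕ) => (Polynomial.C (σ i) * Polynomial.X) ^ e) (pow_zero _),
      Finsupp.prod_single_index (h := fun (i : Fin k) (e : ℕ) => σ i ^ e) (pow_zero _),
      degree_add, degree_single, ih, mul_pow, map_mul, map_pow, pow_add]
    ring

lemma phi_homog (σ : Fin k → A) {d : ℕ} {F : MvPolynomial (Fin k) A} (hF : F.IsHomogeneous d) :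
    phi σ F = Polynomial.C (eval σ F) * Polynomial.X ^ d := by
  have h1 := congrArg (phi σ) F.as_sum
  rw [map_sum] at h1
  have h2 := congrArg (eval σ) F.as_sum
  rw [map_sum] at h2
  rw [h1, h2, map_sum, Finset.sum_mul]
  refine Finset.sum_congr rfl fun m hm => ?_
  rw [phi, aeval_monomial, eval_monomial, prod_CX, ← isHomog_iff.1 hF m (mem_support_iff.1 hm),
    show algebraMap A (Polynomial A) (F.coeff m) = Polynomial.C (F.coeff m) from rfl, map_mul]
  ring

lemma Ir_k (σ : Fin k → A) : Ir σ k = Ideal.span (Set.range σ) := by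
  unfold Ir
  congr 1
  rw [show {i : Fin k | (i : ℕ) < k} = Set.univ from Set.eq_univ_of_forall fun i => i.isLt,
    Set.image_univ]

lemma mem_Spt_k (F : MvPolynomial (Fin k) A) : F ∈ Spt A k k :=
  mem_Spt.2 fun _ _ i hi => absurd hi (not_le.2 i.isLt)

lemma phi_mem_rees (σ : Fin k → A) (F : MvPolynomial (Fin k) A) :
    phi σ F ∈ reesAlgebra (Ideal.span (Set.range σ)) := by
  induction F using MvPolynomial.induction_on with
  | C a => rw [phi, aeval_C]; exact Subalgebra.algebraMap_mem _ a
  | add p q hp hq => rw [map_add]; exact add_mem hp hq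
  | mul_X p i hp =>
    rw [map_mul]
    refine mul_mem hp ?_
    rw [phi, aeval_X, Polynomial.C_mul_X_eq_monomial]
    exact reesAlgebra.monomial_mem.2 (by rw [pow_one]; exact Ideal.subset_span ⟨i, rfl⟩)

/-- The codomain-restricted presentation map. -/
def phi' (σ : Fin k → A) :
    MvPolynomial (Fin k) A →ₐ[A] reesAlgebra (Ideal.span (Set.range σ)) :=
  (phi σ).codRestrict _ (phi_mem_rees σ)

lemma phi'_surj (σ : Fin k → A) : Function.Surjective (phi' σ) := by
  rintro ⟨f, hf⟩
  have hco : ∀ n : ℕ, f.coeff n ∈ Ir σ k ^ n := fun n => by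
    rw [Ir_k]; exact hf n
  set Fn : ℕ → MvPolynomial (Fin k) A :=
    fun n => Classical.choose (exists_form σ k n (f.coeff n) (hco n)) with hFn
  have hFns : ∀ n, (Fn n).IsHomogeneous n ∧ Fn n ∈ Spt A k k ∧ eval σ (Fn n) = f.coeff n :=
    fun n => Classical.choose_spec (exists_form σ k n (f.coeff n) (hco n))
  refine ⟨∑ n ∈ f.support, Fn n, ?_⟩
  apply Subtype.ext
  rw [show ((phi' σ) (∑ n ∈ f.support, Fn n) : Polynomial A) = phi σ (∑ n ∈ f.support, Fn n)
    from AlgHom.coe_codRestrict _ _ _ _]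
  rw [map_sum]
  have : ∀ n ∈ f.support, phi σ (Fn n) = Polynomial.monomial n (f.coeff n) := by
    intro n _
    rw [phi_homog σ (hFns n).1, (hFns n).2.2, Polynomial.C_mul_X_pow_eq_monomial]
  rw [Finset.sum_congr rfl this]
  exact (f.as_sum_support).symm

lemma ker_phi' (σ : Fin k → A) (hreg : RingTheory.Sequence.IsRegular A (List.ofFn σ)) :
    Ideal.span {f : MvPolynomial (Fin k) A | ∃ i j : Fin k, i < j ∧
        f = C (σ i) * X j - C (σ j) * X i} = RingHom.ker (phi' σ).toRingHom := by
  apply le_antisymm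
  · rw [Ideal.span_le]
    rintro x ⟨i, j, hij, rfl⟩
    rw [SetLike.mem_coe, RingHom.mem_ker]
    apply Subtype.ext
    show (phi σ (C (σ i) * X j - C (σ j) * X i) : Polynomial A) = (0 : Polynomial A)
    rw [map_sub, map_mul, map_mul, phi, aeval_C, aeval_X, aeval_X, aeval_C, Polynomial.algebraMap_eq]
    ring
  · intro F hF
    rw [RingHom.mem_ker] at hF
    have hF0 : phi σ F = 0 := by
      have h := congrArg (Subtype.val) hF
      exact h
    have hcomp : ∀ n, eval σ (homogeneousComponent n F) = 0 := by
      intro n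
      by_cases hn : F.totalDegree < n
      · rw [homogeneousComponent_eq_zero n F hn, map_zero]
      · have h4 : phi σ F = ∑ i ∈ Finset.range (F.totalDegree + 1),
            Polynomial.C (eval σ (homogeneousComponent i F)) * Polynomial.X ^ i := by
          conv_lhs => rw [show F = ∑ i ∈ Finset.range (F.totalDegree + 1),
            homogeneousComponent i F from (sum_homogeneousComponent F).symm]
          rw [map_sum]
          exact Finset.sum_congr rfl fun i _ => phi_homog σ (homogeneousComponent_isHomogeneous i F)
        rw [hF0] at h4
        have h5 := congrArg (fun p => Polynomial.coeff p n) h4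
        simp only [Polynomial.coeff_zero, Polynomial.finset_sum_coeff] at h5
        rw [Finset.sum_eq_single n (fun i _ hne => by
            rw [Polynomial.coeff_C_mul, Polynomial.coeff_X_pow, if_neg (Ne.symm hne), mul_zero])
          (fun habs => absurd (Finset.mem_range.2 (by omega)) habs)] at h5
        rw [Polynomial.coeff_C_mul, Polynomial.coeff_X_pow, if_pos rfl, mul_one] at h5
        exact h5.symm
    have hdec : F = ∑ i ∈ Finset.range (F.totalDegree + 1), homogeneousComponent i F :=
      (sum_homogeneousComponent F).symm
    rw [hdec]
    refine Ideal.sum_mem _ fun n _ => ?_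
    exact main_koszul σ hreg k le_rfl n (homogeneousComponent n F)
      (homogeneousComponent_isHomogeneous n F) (mem_Spt_k _) (hcomp n)


lemma coe_phi' (σ : Fin k → A) (x : MvPolynomial (Fin k) A) :
    ((phi' σ) x : Polynomial A) = phi σ x := rfl

lemma phi_X (σ : Fin k → A) (i : Fin k) :
    phi σ (X i) = Polynomial.C (σ i) * Polynomial.X := by
  have h : ∀ g : Fin k → Polynomial A, (aeval (R := A) g) (X i) = g i := fun g => aeval_X g i
  exact h fun j => Polynomial.C (σ j) * Polynomial.X

end ReesAux


open MvPolynomial in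
/-- For a regular sequence `σ₁, …, σ_k` in `A` with `I = (σ₁,…,σ_k)`, the Rees
algebra `⊕_{n≥0} Iⁿ tⁿ` is isomorphic as a graded `A`-algebra to
`A[u₁,…,u_k]/(σ_i u_j - σ_j u_i : i < j)`, with each `u_i` of degree `1` mapping
to `σ_i t`. -/
theorem stmt5 (A : Type) [CommRing A] (k : ℕ) (σ : Fin k → A)
    (hreg : RingTheory.Sequence.IsRegular A (List.ofFn σ)) :
    ∃ e : (MvPolynomial (Fin k) A ⧸
        Ideal.span {f : MvPolynomial (Fin k) A | ∃ i j : Fin k, i < j ∧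
          f = MvPolynomial.C (σ i) * X j - MvPolynomial.C (σ j) * X i})
      ≃ₐ[A] reesAlgebra (Ideal.span (Set.range σ)),
      (∀ i : Fin k,
        (e (Ideal.Quotient.mk _ (X i)) : Polynomial A) = Polynomial.C (σ i) * Polynomial.X) ∧
      ∀ d : ℕ,
        Submodule.map
          ((Subalgebra.val _).toLinearMap.comp
            (e.toLinearMap.comp (Ideal.Quotient.mkₐ A _).toLinearMap))
          (homogeneousSubmodule (Fin k) A d)
        = reesPieceP A (Ideal.span (Set.range σ)) d := by
  classical
  have hker : Ideal.span {f : MvPolynomial (Fin k) A | ∃ i j : Fin k, i < j ∧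
      f = MvPolynomial.C (σ i) * X j - MvPolynomial.C (σ j) * X i}
      = RingHom.ker (ReesAux.phi' σ).toRingHom := ReesAux.ker_phi' σ hreg
  have hsurj : Function.Surjective (ReesAux.phi' σ) := ReesAux.phi'_surj σ
  set e := (Ideal.quotientEquivAlgOfEq A hker).trans
    (Ideal.quotientKerAlgEquivOfSurjective hsurj) with he
  have he_mk : ∀ x : MvPolynomial (Fin k) A,
      e (Ideal.Quotient.mk _ x) = ReesAux.phi' σ x := by
    intro x
    rfl
  have hLmap : ∀ F : MvPolynomial (Fin k) A,
      ((Subalgebra.val _).toLinearMap.comp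
        (e.toLinearMap.comp (Ideal.Quotient.mkₐ A _).toLinearMap)) F = ReesAux.phi σ F := by
    intro F
    show ((e ((Ideal.Quotient.mkₐ A _) F)) : Polynomial A) = _
    rw [Ideal.Quotient.mkₐ_eq_mk, he_mk F, ReesAux.coe_phi']
  refine ⟨e, ?_, ?_⟩
  · intro i
    rw [he_mk (X i), ReesAux.coe_phi', ReesAux.phi_X]
  · intro d
    apply le_antisymm
    · rintro x hx
      rw [Submodule.mem_map] at hx
      obtain ⟨F, hF, rfl⟩ := hx
      rw [hLmap F, ReesAux.phi_homog σ ((mem_homogeneousSubmodule _ _).1 hF)]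
      refine Submodule.subset_span ⟨eval σ F, ?_, rfl⟩
      rw [← ReesAux.Ir_k σ]
      exact ReesAux.eval_mem ((mem_homogeneousSubmodule _ _).1 hF) (ReesAux.mem_Spt_k F)
    · rw [reesPieceP, Submodule.span_le]
      rintro x ⟨a, ha, rfl⟩
      obtain ⟨F, hFh, _, hFe⟩ := ReesAux.exists_form σ k d a (by rw [ReesAux.Ir_k σ]; exact ha)
      rw [SetLike.mem_coe, Submodule.mem_map]
      refine ⟨F, (mem_homogeneousSubmodule _ _).2 hFh, ?_⟩
      rw [hLmap F, ReesAux.phi_homog σ hFh, hFe]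

end
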